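/- Let h : ℝ → ℝ be three times differentiable, let a(u) = (−h(u)·cos u + h'(u)·sin u, −h(u)·sin u − h'(u)·cos u), set ρ₀ = h(0) + h''(0), and define the osculating circle parameterization c_o(u) = (h''(0) − ρ₀·cos u, −h'(0) − ρ₀·sin u). Then as u → 0, c_o(u) − a(u) = ((h'(0) + h'''(0))/2)·u²·(0, 1) + o(u²); in particular the error vector c_o(u) − a(u) is O(u²) and its quadratic term points in the tangential direction (0,1) at the point p = a(0), so c_o has second order (geometric) contact with a at p. -/

import Mathlib

open Real Asymptotics Filter

lemma isLittleO_sq_of_deriv {F F' : ℝ → ℝ}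
    (hF : ∀ x, HasDerivAt F (F' x) x) (h0 : F 0 = 0)
    (hF' : F' =o[nhds 0] (fun u : ℝ => u)) :
    F =o[nhds 0] (fun u : ℝ => u ^ 2) := by
  rw [isLittleO_iff] at hF' ⊢
  intro ε hε
  have hF'' := hF' hε
  rw [Metric.eventually_nhds_iff] at hF'' ⊢
  obtain ⟨δ, hδ, hb⟩ := hF''
  refine ⟨δ, hδ, fun u hu => ?_⟩
  have hud : |u| < δ := by simpa [Real.dist_eq] using hu
  set s : Set ℝ := Set.Icc (-|u|) (|u|) with hs
  have hconv : Convex ℝ s := convex_Icc _ _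
  have hmem : ∀ t ∈ s, HasDerivWithinAt F (F' t) s t := fun t _ => (hF t).hasDerivWithinAt
  have hbound : ∀ t ∈ s, ‖F' t‖ ≤ ε * |u| := by
    intro t ht
    have h1 : |t| ≤ |u| := abs_le.mpr ⟨ht.1, ht.2⟩
    have h2 : dist t 0 < δ := by
      rw [Real.dist_eq, sub_zero]; exact lt_of_le_of_lt h1 hud
    calc ‖F' t‖ ≤ ε * ‖t‖ := hb h2
      _ ≤ ε * |u| := by
          have : ‖t‖ ≤ |u| := h1
          exact mul_le_mul_of_nonneg_left this hε.le
  have h0s : (0:ℝ) ∈ s := ⟨neg_nonpos.mpr (abs_nonneg u), abs_nonneg u⟩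
  have hus : u ∈ s := ⟨neg_abs_le u, le_abs_self u⟩
  have := hconv.norm_image_sub_le_of_norm_hasDerivWithin_le hmem hbound h0s hus
  rw [h0, sub_zero, sub_zero] at this
  calc ‖F u‖ ≤ ε * |u| * ‖u‖ := this
    _ = ε * ‖u ^ 2‖ := by
        rw [Real.norm_eq_abs, Real.norm_eq_abs, abs_pow, sq]
        ring

lemma taylor2 (g g' : ℝ → ℝ) (c0 c1 c2 : ℝ)
    (hg : ∀ x, HasDerivAt g (g' x) x) (hg'' : HasDerivAt g' c2 0)
    (h0 : g 0 = c0) (h1 : g' 0 = c1) :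
    (fun u : ℝ => g u - c0 - c1 * u - c2 / 2 * u ^ 2) =o[nhds 0] (fun u : ℝ => u ^ 2) := by
  apply isLittleO_sq_of_deriv (F' := fun u => g' u - c1 - c2 * u)
  · intro x
    have h2 : HasDerivAt (fun u : ℝ => g u - c0 - c1 * u - c2 / 2 * u ^ 2)
        (g' x - 0 - c1 * 1 - c2 / 2 * (2 * x ^ 1)) x := by
      exact (((hg x).sub (hasDerivAt_const x c0)).sub
        ((hasDerivAt_id x).const_mul c1)).sub ((hasDerivAt_pow 2 x).const_mul (c2 / 2))
    convert h2 using 1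
    ring
  · simp [h0]
  · have := hg''.isLittleO
    have h2 : (fun u : ℝ => g' u - c1 - c2 * u) = fun u : ℝ => g' u - g' 0 - (u - 0) • c2 := by
      funext u; simp [h1]; ring
    rw [h2]
    simpa using this

/-- For a three times differentiable support function `h`, with envelope curve
`a(u) = (−h·cos u + h'·sin u, −h·sin u − h'·cos u)`, `ρ₀ = h(0) + h''(0)`, and the
osculating circle `c_o(u) = (h''(0) − ρ₀·cos u, −h'(0) − ρ₀·sin u)`, one has, as `u → 0`,
`c_o(u) − a(u) = ((h'(0) + h'''(0))/2)·u²·(0,1) + o(u²)`; in particular the error vector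
`c_o(u) − a(u)` is `O(u²)` and its quadratic term points in the tangential direction
`(0,1)` at `p = a(0)`, so `c_o` has second order contact with `a` at `p`. -/
theorem osculating_circle_second_order_contact
    (h : ℝ → ℝ) (hh : Differentiable ℝ h) (hh' : Differentiable ℝ (deriv h))
    (hh'' : Differentiable ℝ (deriv (deriv h)))
    (a cO : ℝ → ℝ × ℝ) (ρ₀ : ℝ)
    (hρ₀ : ρ₀ = h 0 + deriv (deriv h) 0)
    (ha : a = fun u => (-h u * Real.cos u + deriv h u * Real.sin u,
                        -h u * Real.sin u - deriv h u * Real.cos u))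
    (hcO : cO = fun u => (deriv (deriv h) 0 - ρ₀ * Real.cos u,
                          -deriv h 0 - ρ₀ * Real.sin u)) :
    (fun u : ℝ => cO u - a u -
        ((deriv h 0 + deriv (deriv (deriv h)) 0) / 2 * u ^ 2) • ((0 : ℝ), (1 : ℝ)))
      =o[nhds 0] (fun u : ℝ => u ^ 2) ∧
    (fun u : ℝ => cO u - a u) =O[nhds 0] (fun u : ℝ => u ^ 2) := by
  subst ha hcO hρ₀
  set c : ℝ := deriv h 0 + deriv (deriv (deriv h)) 0 with hc
  -- component functions
  set g₁ : ℝ → ℝ := fun u =>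
    (deriv (deriv h) 0 - (h 0 + deriv (deriv h) 0) * Real.cos u) -
      (-h u * Real.cos u + deriv h u * Real.sin u) with hg₁def
  set g₂ : ℝ → ℝ := fun u =>
    (-deriv h 0 - (h 0 + deriv (deriv h) 0) * Real.sin u) -
      (-h u * Real.sin u - deriv h u * Real.cos u) with hg₂def
  set g₁' : ℝ → ℝ := fun u =>
    ((h 0 + deriv (deriv h) 0) - h u - deriv (deriv h) u) * Real.sin u with hg₁'def
  set g₂' : ℝ → ℝ := fun u =>
    (h u + deriv (deriv h) u - (h 0 + deriv (deriv h) 0)) * Real.cos u with hg₂'def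
  have hd₁ : ∀ x, HasDerivAt g₁ (g₁' x) x := by
    intro x
    have h2 : HasDerivAt g₁
        ((0 - (h 0 + deriv (deriv h) 0) * (-Real.sin x)) -
          ((-deriv h x * Real.cos x + -h x * (-Real.sin x)) +
            (deriv (deriv h) x * Real.sin x + deriv h x * Real.cos x))) x := by
      exact (((hasDerivAt_const x (deriv (deriv h) 0)).sub
          ((Real.hasDerivAt_cos x).const_mul (h 0 + deriv (deriv h) 0))).sub
        (((hh x).hasDerivAt.neg.mul (Real.hasDerivAt_cos x)).add
          ((hh' x).hasDerivAt.mul (Real.hasDerivAt_sin x))))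
    convert h2 using 1
    simp only [hg₁'def]; ring
  have hd₂ : ∀ x, HasDerivAt g₂ (g₂' x) x := by
    intro x
    have h2 : HasDerivAt g₂
        ((0 - (h 0 + deriv (deriv h) 0) * Real.cos x) -
          ((-deriv h x * Real.sin x + -h x * Real.cos x) -
            (deriv (deriv h) x * Real.cos x + deriv h x * (-Real.sin x)))) x := by
      exact (((hasDerivAt_const x (-deriv h 0)).sub
          ((Real.hasDerivAt_sin x).const_mul (h 0 + deriv (deriv h) 0))).sub
        (((hh x).hasDerivAt.neg.mul (Real.hasDerivAt_sin x)).sub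
          ((hh' x).hasDerivAt.mul (Real.hasDerivAt_cos x))))
    convert h2 using 1
    simp only [hg₂'def]; ring
  have hd₁' : HasDerivAt g₁' 0 0 := by
    have hA : HasDerivAt (fun u => (h 0 + deriv (deriv h) 0) - h u - deriv (deriv h) u)
        (0 - deriv h 0 - deriv (deriv (deriv h)) 0) 0 :=
      ((hasDerivAt_const (0:ℝ) (h 0 + deriv (deriv h) 0)).sub (hh 0).hasDerivAt).sub
        (hh'' 0).hasDerivAt
    have h2 : HasDerivAt g₁' _ 0 := hA.mul (Real.hasDerivAt_sin 0)
    convert h2 using 1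
    simp
  have hd₂' : HasDerivAt g₂' c 0 := by
    have hA : HasDerivAt (fun u => h u + deriv (deriv h) u - (h 0 + deriv (deriv h) 0))
        (deriv h 0 + deriv (deriv (deriv h)) 0 - 0) 0 :=
      ((hh 0).hasDerivAt.add (hh'' 0).hasDerivAt).sub
        (hasDerivAt_const (0:ℝ) (h 0 + deriv (deriv h) 0))
    have h2 : HasDerivAt g₂' _ 0 := hA.mul (Real.hasDerivAt_cos 0)
    convert h2 using 1
    simp [hc]
  have h₁0 : g₁ 0 = 0 := by simp [hg₁def]
  have h₂0 : g₂ 0 = 0 := by simp [hg₂def]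
  have h₁'0 : g₁' 0 = 0 := by simp [hg₁'def]
  have h₂'0 : g₂' 0 = 0 := by simp [hg₂'def]
  have o₁ := taylor2 g₁ g₁' 0 0 0 hd₁ hd₁' h₁0 h₁'0
  have o₂ := taylor2 g₂ g₂' 0 0 c hd₂ hd₂' h₂0 h₂'0
  simp only [zero_mul, sub_zero, zero_div] at o₁ o₂
  have key : (fun u : ℝ =>
      ((deriv (deriv h) 0 - (h 0 + deriv (deriv h) 0) * Real.cos u,
        -deriv h 0 - (h 0 + deriv (deriv h) 0) * Real.sin u) -
        (-h u * Real.cos u + deriv h u * Real.sin u,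
         -h u * Real.sin u - deriv h u * Real.cos u) -
        (c / 2 * u ^ 2) • ((0 : ℝ), (1 : ℝ))))
      =o[nhds 0] (fun u : ℝ => u ^ 2) := by
    have := o₁.prod_left o₂
    refine this.congr' ?_ (by rfl)
    filter_upwards with u
    simp only [hg₁def, hg₂def, Prod.mk_sub_mk, Prod.smul_mk, smul_eq_mul, mul_zero, mul_one,
      Prod.mk.injEq]
    exact ⟨by ring, trivial⟩
  constructor
  · exact key
  · have h2 : (fun u : ℝ => (c / 2 * u ^ 2) • ((0 : ℝ), (1 : ℝ)))
        =O[nhds 0] (fun u : ℝ => u ^ 2) := by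
      rw [isBigO_iff]
      refine ⟨|c / 2| * ‖((0 : ℝ), (1 : ℝ))‖, Filter.Eventually.of_forall fun u => ?_⟩
      rw [norm_smul]
      simp only [Real.norm_eq_abs, abs_mul]
      ring_nf
      nlinarith [norm_nonneg ((0 : ℝ), (1 : ℝ)), abs_nonneg (c/2), sq_abs u, abs_nonneg (u^2)]
    have := key.isBigO.add h2
    refine this.congr' ?_ (by rfl)
    filter_upwards with u
    abel
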